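/- (Moment generating function bound for the sample mean under sampling without replacement.) For every t ∈ ℝ, E[exp(t (ā₁(Z) − ā))] ≤ exp(σ²_mean t² / (n + 2)), where σ²_mean = (e_c² n)⁻¹ ∑_{i=1}^n (a_i − ā)². -/

import Mathlib

open Finset



private lemma aux_psi (d : ℝ) (hd : 0 ≤ d) : 2 * (Real.exp d - 1) ≤ d * (Real.exp d + 1) := by
  have hder : ∀ x : ℝ, HasDerivAt (fun d : ℝ => (d - 2) * Real.exp d + (d + 2))
      ((x - 1) * Real.exp x + 1) x := by
    intro x
    have h := (((hasDerivAt_id x).sub_const 2).mul (Real.hasDerivAt_exp x)).add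
      ((hasDerivAt_id x).add_const 2)
    exact h.congr_deriv (by simp only [id]; ring)
  have hmono : MonotoneOn (fun d : ℝ => (d - 2) * Real.exp d + (d + 2)) (Set.Ici 0) := by
    apply monotoneOn_of_deriv_nonneg (convex_Ici 0)
    · fun_prop
    · apply Differentiable.differentiableOn; fun_prop
    · intro x hx
      rw [(hder x).deriv]
      have h1 : Real.exp x * Real.exp (-x) = 1 := by rw [← Real.exp_add]; simp
      nlinarith [Real.add_one_le_exp (-x), Real.exp_pos x]
  have := hmono (Set.self_mem_Ici) (Set.mem_Ici.2 hd) hd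
  simp only [Real.exp_zero] at this
  nlinarith [this]

private lemma exp_pair (x y : ℝ) :
    (x - y) * (Real.exp x - Real.exp y) ≤ (x - y)^2 * (Real.exp x + Real.exp y) / 2 := by
  rcases le_total y x with h | h
  · have hd : 0 ≤ x - y := by linarith
    have hy := Real.exp_pos y
    have hxy : Real.exp x = Real.exp y * Real.exp (x - y) := by
      rw [← Real.exp_add]; ring_nf
    have := aux_psi (x - y) hd
    nlinarith [mul_le_mul_of_nonneg_left this hd, Real.exp_pos (x - y)]
  · have hd : 0 ≤ y - x := by linarith
    have hy := Real.exp_pos x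
    have hxy : Real.exp y = Real.exp x * Real.exp (y - x) := by
      rw [← Real.exp_add]; ring_nf
    have := aux_psi (y - x) hd
    nlinarith [mul_le_mul_of_nonneg_left this hd, Real.exp_pos (y - x)]

private lemma exp_pair_scaled (s c x y : ℝ) (hs : 0 ≤ s) (h : x - y = s * c) :
    c * (Real.exp x - Real.exp y) ≤ s * c^2 * (Real.exp x + Real.exp y) / 2 := by
  rcases eq_or_lt_of_le hs with rfl | hs'
  · have : x = y := by linarith [h.symm]
    subst this
    simp
  · have h2 := exp_pair x y
    rw [h] at h2
    rw [← mul_le_mul_iff_right₀ hs']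
    nlinarith [h2]

private lemma swap_mem {n n₁ : ℕ} {A : Finset (Fin n)} {i j : Fin n} (hij : i ≠ j)
    (hcard : A.card = n₁) (hiA : i ∈ A) (hjA : j ∉ A) :
    (insert j (A.erase i)).card = n₁ ∧ j ∈ insert j (A.erase i) ∧ i ∉ insert j (A.erase i) := by
  have hje : j ∉ A.erase i := fun h => hjA (Finset.mem_of_mem_erase h)
  refine ⟨?_, Finset.mem_insert_self j _, ?_⟩
  · rw [Finset.card_insert_of_notMem hje, Finset.card_erase_of_mem hiA]
    have : 1 ≤ A.card := Finset.card_pos.2 ⟨i, hiA⟩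
    omega
  · simp only [Finset.mem_insert, Finset.mem_erase]
    rintro (h | ⟨hne, _⟩)
    · exact hij h
    · exact hne rfl

private lemma swap_invol {n : ℕ} {A : Finset (Fin n)} {i j : Fin n}
    (hiA : i ∈ A) (hjA : j ∉ A) : insert i ((insert j (A.erase i)).erase j) = A := by
  have hje : j ∉ A.erase i := fun h => hjA (Finset.mem_of_mem_erase h)
  rw [Finset.erase_insert hje, Finset.insert_erase hiA]

private lemma swap_reindex {n : ℕ} (n₁ : ℕ) (i j : Fin n) (hij : i ≠ j) (g : Finset (Fin n) → ℝ) :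
    ∑ A ∈ (powersetCard n₁ (univ : Finset (Fin n))).filter (fun A => j ∈ A ∧ i ∉ A), g A
      = ∑ A ∈ (powersetCard n₁ (univ : Finset (Fin n))).filter (fun A => i ∈ A ∧ j ∉ A),
          g (insert j (A.erase i)) := by
  apply Finset.sum_nbij' (fun A => insert i (A.erase j)) (fun A => insert j (A.erase i))
  · intro A hA
    simp only [mem_filter, Finset.mem_powersetCard_univ] at hA ⊢
    obtain ⟨hcard, hjA, hiA⟩ := hA
    obtain ⟨h1, h2, h3⟩ := swap_mem hij.symm hcard hjA hiA
    exact ⟨h1, h2, h3⟩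
  · intro A hA
    simp only [mem_filter, Finset.mem_powersetCard_univ] at hA ⊢
    obtain ⟨hcard, hiA, hjA⟩ := hA
    obtain ⟨h1, h2, h3⟩ := swap_mem hij hcard hiA hjA
    exact ⟨h1, h2, h3⟩
  · intro A hA
    simp only [mem_filter, Finset.mem_powersetCard_univ] at hA
    exact swap_invol hA.2.1 hA.2.2
  · intro A hA
    simp only [mem_filter, Finset.mem_powersetCard_univ] at hA
    exact swap_invol hA.2.1 hA.2.2
  · intro A hA
    simp only [mem_filter, Finset.mem_powersetCard_univ] at hA
    rw [swap_invol hA.2.1 hA.2.2]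

private lemma sum_sq_pairs {n : ℕ} (b : Fin n → ℝ) (hb : ∑ i, b i = 0) :
    ∑ i : Fin n, ∑ j : Fin n, (b i - b j)^2 = 2 * n * ∑ i, (b i)^2 := by
  have h : ∀ i j : Fin n, (b i - b j)^2 = (b i)^2 - 2*(b i * b j) + (b j)^2 := by
    intros; ring
  simp_rw [h, Finset.sum_add_distrib, Finset.sum_sub_distrib, ← Finset.mul_sum, hb,
    Finset.sum_const, Finset.card_univ, Fintype.card_fin, nsmul_eq_mul]
  simp_rw [mul_zero, Finset.sum_const_zero, ← Finset.mul_sum]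
  ring

-- claim 1: inner double sum representation of n * S A
private lemma rep_nS {n n₁ : ℕ} (hn₁ : n₁ ≤ n) (b : Fin n → ℝ) (hb : ∑ i, b i = 0)
    {A : Finset (Fin n)} (hA : A.card = n₁) :
    ∑ i ∈ A, ∑ j ∈ univ \ A, (b i - b j) = (n : ℝ) * ∑ i ∈ A, b i := by
  have hcard : (univ \ A).card = n - n₁ := by
    rw [Finset.card_sdiff_of_subset (Finset.subset_univ A), Finset.card_univ, Fintype.card_fin, hA]
  have hsd : ∑ j ∈ univ \ A, b j = - ∑ i ∈ A, b i := by
    rw [Finset.sum_sdiff_eq_sub (Finset.subset_univ A), hb]; ring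
  have inner : ∀ i ∈ A, ∑ j ∈ univ \ A, (b i - b j)
      = ((n : ℝ) - n₁) * b i + ∑ k ∈ A, b k := by
    intro i _
    rw [Finset.sum_sub_distrib, Finset.sum_const, hcard, hsd, nsmul_eq_mul,
      Nat.cast_sub hn₁]
    ring
  rw [Finset.sum_congr rfl inner, Finset.sum_add_distrib, ← Finset.mul_sum,
    Finset.sum_const, hA, nsmul_eq_mul]
  ring

private lemma key_ineq {n : ℕ} (n₁ : ℕ) (hn : 0 < n) (hn₁ : n₁ ≤ n) (b : Fin n → ℝ)
    (hb : ∑ i, b i = 0) (s : ℝ) (hs : 0 ≤ s) :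
    ∑ A ∈ powersetCard n₁ (univ : Finset (Fin n)),
        (∑ k ∈ A, b k) * Real.exp (s * ∑ k ∈ A, b k)
      ≤ s * (∑ i, (b i)^2) *
        ∑ A ∈ powersetCard n₁ (univ : Finset (Fin n)), Real.exp (s * ∑ k ∈ A, b k) := by
  set P := powersetCard n₁ (univ : Finset (Fin n)) with hP
  set E : Finset (Fin n) → ℝ := fun A => Real.exp (s * ∑ k ∈ A, b k) with hE
  set G : Fin n → Fin n → ℝ :=
    fun i j => ∑ A ∈ P.filter (fun A => i ∈ A ∧ j ∉ A), (b i - b j) * E A with hG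
  have hEpos : ∀ A, 0 < E A := fun A => Real.exp_pos _
  -- step 1 : n * LHS = double sum of G
  have h0 : (n : ℝ) * ∑ A ∈ P, (∑ k ∈ A, b k) * E A = ∑ i : Fin n, ∑ j : Fin n, G i j := by
    rw [Finset.mul_sum]
    have h1 : ∀ A ∈ P, (n : ℝ) * ((∑ k ∈ A, b k) * E A)
        = ∑ i ∈ A, ∑ j ∈ univ \ A, (b i - b j) * E A := by
      intro A hA
      rw [Finset.mem_powersetCard_univ] at hA
      have := rep_nS hn₁ b hb hA
      calc (n : ℝ) * ((∑ k ∈ A, b k) * E A)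
          = ((n : ℝ) * ∑ k ∈ A, b k) * E A := by ring
        _ = (∑ i ∈ A, ∑ j ∈ univ \ A, (b i - b j)) * E A := by rw [this]
        _ = ∑ i ∈ A, ∑ j ∈ univ \ A, (b i - b j) * E A := by
            rw [Finset.sum_mul]
            exact Finset.sum_congr rfl fun i _ => Finset.sum_mul _ _ _
    rw [Finset.sum_congr rfl h1]
    -- reorder the triple sum
    rw [Finset.sum_comm' (s' := fun i => P.filter (fun A => i ∈ A)) (t' := univ)
        (by intro A i; simp [Finset.mem_filter, and_comm])]
    refine Finset.sum_congr rfl fun i _ => ?_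
    rw [Finset.sum_comm' (s' := fun j => (P.filter (fun A => i ∈ A)).filter
        (fun A => j ∉ A)) (t' := univ)
        (by intro A j; simp [Finset.mem_filter, Finset.mem_sdiff])]
    refine Finset.sum_congr rfl fun j _ => ?_
    rw [Finset.filter_filter]
  -- step 2 : pairwise bound
  have hGpair : ∀ i j : Fin n, G i j + G j i ≤ s * (b i - b j)^2 * ∑ A ∈ P, E A := by
    intro i j
    by_cases hij : i = j
    · subst hij
      have hempty : P.filter (fun A => i ∈ A ∧ i ∉ A) = ∅ :=
        Finset.filter_false_of_mem (by tauto)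
      simp [hG, hempty]
    · have hswapE : ∑ A ∈ P.filter (fun A => j ∈ A ∧ i ∉ A), E A
          = ∑ A ∈ P.filter (fun A => i ∈ A ∧ j ∉ A), E (insert j (A.erase i)) :=
        swap_reindex n₁ i j hij E
      have hswapG : G j i = ∑ A ∈ P.filter (fun A => i ∈ A ∧ j ∉ A),
          (b j - b i) * E (insert j (A.erase i)) :=
        swap_reindex n₁ i j hij (fun A => (b j - b i) * E A)
      have step2 : G i j + G j i = ∑ A ∈ P.filter (fun A => i ∈ A ∧ j ∉ A),
          ((b i - b j) * E A + (b j - b i) * E (insert j (A.erase i))) := by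
        rw [hswapG]
        show (∑ A ∈ P.filter (fun A => i ∈ A ∧ j ∉ A), (b i - b j) * E A) + _ = _
        rw [← Finset.sum_add_distrib]
      have step3 : ∀ A ∈ P.filter (fun A => i ∈ A ∧ j ∉ A),
          (b i - b j) * E A + (b j - b i) * E (insert j (A.erase i))
            ≤ s * (b i - b j)^2 * (E A + E (insert j (A.erase i))) / 2 := by
        intro A hA
        rw [Finset.mem_filter] at hA
        obtain ⟨_, hiA, hjA⟩ := hA
        have hje : j ∉ A.erase i := fun h => hjA (Finset.mem_of_mem_erase h)
        have hSd : s * ∑ k ∈ A, b k - s * ∑ k ∈ insert j (A.erase i), b k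
            = s * (b i - b j) := by
          rw [Finset.sum_insert hje, Finset.sum_erase_eq_sub hiA]
          ring
        have := exp_pair_scaled s (b i - b j) (s * ∑ k ∈ A, b k)
          (s * ∑ k ∈ insert j (A.erase i), b k) hs hSd
        rw [hE]
        nlinarith [this]
      have step4 := step2.le.trans (Finset.sum_le_sum step3)
      have split : ∑ A ∈ P.filter (fun A => i ∈ A ∧ j ∉ A),
          s * (b i - b j)^2 * (E A + E (insert j (A.erase i))) / 2
          = s * (b i - b j)^2 / 2 * ((∑ A ∈ P.filter (fun A => i ∈ A ∧ j ∉ A), E A)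
            + ∑ A ∈ P.filter (fun A => j ∈ A ∧ i ∉ A), E A) := by
        rw [hswapE, ← Finset.sum_add_distrib, Finset.mul_sum]
        exact Finset.sum_congr rfl fun A _ => by ring
      have hsub1 : ∑ A ∈ P.filter (fun A => i ∈ A ∧ j ∉ A), E A ≤ ∑ A ∈ P, E A :=
        Finset.sum_le_sum_of_subset_of_nonneg (Finset.filter_subset _ _)
          (fun A _ _ => (hEpos A).le)
      have hsub2 : ∑ A ∈ P.filter (fun A => j ∈ A ∧ i ∉ A), E A ≤ ∑ A ∈ P, E A :=
        Finset.sum_le_sum_of_subset_of_nonneg (Finset.filter_subset _ _)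
          (fun A _ _ => (hEpos A).le)
      have hc : 0 ≤ s * (b i - b j)^2 / 2 := by positivity
      calc G i j + G j i ≤ _ := step4
        _ = _ := split
        _ ≤ s * (b i - b j)^2 / 2 * (∑ A ∈ P, E A + ∑ A ∈ P, E A) := by
            apply mul_le_mul_of_nonneg_left _ hc
            exact add_le_add hsub1 hsub2
        _ = s * (b i - b j)^2 * ∑ A ∈ P, E A := by ring
  -- step 3 : assemble
  have hdouble : ∑ i : Fin n, ∑ j : Fin n, G j i = ∑ i : Fin n, ∑ j : Fin n, G i j :=
    Finset.sum_comm
  have hbound : 2 * ∑ i : Fin n, ∑ j : Fin n, G i j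
      ≤ s * (2 * n * ∑ i, (b i)^2) * ∑ A ∈ P, E A := by
    have h2 : ∑ i : Fin n, ∑ j : Fin n, (G i j + G j i)
        ≤ ∑ i : Fin n, ∑ j : Fin n, s * (b i - b j)^2 * ∑ A ∈ P, E A :=
      Finset.sum_le_sum fun i _ => Finset.sum_le_sum fun j _ => hGpair i j
    have h3 : ∑ i : Fin n, ∑ j : Fin n, (G i j + G j i)
        = 2 * ∑ i : Fin n, ∑ j : Fin n, G i j := by
      simp_rw [Finset.sum_add_distrib]
      rw [hdouble]; ring
    have h4 : ∑ i : Fin n, ∑ j : Fin n, s * (b i - b j)^2 * ∑ A ∈ P, E A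
        = s * (2 * n * ∑ i, (b i)^2) * ∑ A ∈ P, E A := by
      simp_rw [← Finset.sum_mul, ← Finset.mul_sum]
      rw [sum_sq_pairs b hb]
    rw [← h3, ← h4]
    exact h2
  have hn' : (0 : ℝ) < n := by positivity
  have final : (n : ℝ) * ∑ A ∈ P, (∑ k ∈ A, b k) * E A
      ≤ (n : ℝ) * (s * (∑ i, (b i)^2) * ∑ A ∈ P, E A) := by
    rw [h0]
    nlinarith [hbound]
  exact le_of_mul_le_mul_left final hn'
private lemma mgf_core_nonneg {n : ℕ} (n₁ : ℕ) (hn : 0 < n) (hn₁ : n₁ ≤ n) (b : Fin n → ℝ)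
    (hb : ∑ i, b i = 0) (s : ℝ) (hs : 0 ≤ s) :
    ∑ A ∈ powersetCard n₁ (univ : Finset (Fin n)), Real.exp (s * ∑ k ∈ A, b k)
      ≤ ((powersetCard n₁ (univ : Finset (Fin n))).card : ℝ) *
        Real.exp ((∑ i, (b i)^2) * s^2 / 2) := by
  set P := powersetCard n₁ (univ : Finset (Fin n)) with hP
  set V := ∑ i, (b i)^2 with hV
  set F : ℝ → ℝ := fun u => ∑ A ∈ P, Real.exp (u * ∑ k ∈ A, b k) with hF
  set H : ℝ → ℝ := fun u => F u * Real.exp (-(V * u^2 / 2)) with hH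
  have hFd : ∀ u, HasDerivAt F
      (∑ A ∈ P, (∑ k ∈ A, b k) * Real.exp (u * ∑ k ∈ A, b k)) u := by
    intro u
    apply HasDerivAt.fun_sum
    intro A _
    have h1 : HasDerivAt (fun u : ℝ => u * ∑ k ∈ A, b k) (∑ k ∈ A, b k) u :=
      hasDerivAt_mul_const _
    exact h1.exp.congr_deriv (by ring)
  have hGd : ∀ u, HasDerivAt (fun u : ℝ => Real.exp (-(V * u^2 / 2)))
      (Real.exp (-(V * u^2 / 2)) * (-(V * u))) u := by
    intro u
    have h1 : HasDerivAt (fun u : ℝ => -(V * u^2 / 2)) (-(V * u)) u := by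
      have h2 := (((hasDerivAt_pow 2 u).const_mul V).div_const 2).neg
      exact h2.congr_deriv (by push_cast; ring)
    exact h1.exp
  have hHd : ∀ u, HasDerivAt H
      ((∑ A ∈ P, (∑ k ∈ A, b k) * Real.exp (u * ∑ k ∈ A, b k)) * Real.exp (-(V * u^2 / 2))
        + F u * (Real.exp (-(V * u^2 / 2)) * (-(V * u)))) u :=
    fun u => (hFd u).mul (hGd u)
  have hanti : AntitoneOn H (Set.Ici (0:ℝ)) := by
    apply antitoneOn_of_deriv_nonpos (convex_Ici 0)
    · exact (HasDerivAt.continuousOn (fun x _ => hHd x))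
    · intro x _
      exact ((hHd x).differentiableAt).differentiableWithinAt
    · intro x hx
      rw [interior_Ici] at hx
      rw [(hHd x).deriv]
      have hx' : (0:ℝ) ≤ x := (Set.mem_Ioi.1 hx).le
      have hk := key_ineq n₁ hn hn₁ b hb x hx'
      have he := Real.exp_pos (-(V * x^2 / 2))
      have hmul := mul_le_mul_of_nonneg_right hk he.le
      nlinarith [hmul]
  have hend := hanti Set.self_mem_Ici (Set.mem_Ici.2 hs) hs
  have hH0 : H 0 = (P.card : ℝ) := by
    simp [hH, hF]
  rw [hH0] at hend
  have hfin := mul_le_mul_of_nonneg_right hend (Real.exp_nonneg (V * s^2 / 2))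
  rw [hH, mul_assoc, ← Real.exp_add] at hfin
  simpa using hfin
private lemma mgf_core {n : ℕ} (n₁ : ℕ) (hn : 0 < n) (hn₁ : n₁ ≤ n) (b : Fin n → ℝ)
    (hb : ∑ i, b i = 0) (s : ℝ) :
    ∑ A ∈ powersetCard n₁ (univ : Finset (Fin n)), Real.exp (s * ∑ k ∈ A, b k)
      ≤ ((powersetCard n₁ (univ : Finset (Fin n))).card : ℝ) *
        Real.exp ((∑ i, (b i)^2) * s^2 / 2) := by
  rcases le_total 0 s with hs | hs
  · exact mgf_core_nonneg n₁ hn hn₁ b hb s hs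
  · have h := mgf_core_nonneg n₁ hn hn₁ (fun i => -b i) (by simp [hb]) (-s) (by linarith)
    simp only [Finset.sum_neg_distrib, mul_neg, neg_neg, neg_mul, neg_sq] at h
    exact h

/-- **MGF bound for the sample mean under sampling without replacement.**
`Z` is uniform on `G = {z ∈ {0,1}ⁿ : ∑ zᵢ = n₁}`, encoded by the `n₁`-element subsets
`A` of `Fin n`.  With `ā₁(A) = n₁⁻¹ ∑_{i∈A} aᵢ`, `ā = n⁻¹ ∑ᵢ aᵢ`, `e_c = n₁/n` and
`σ²_mean = (e_c² n)⁻¹ ∑ᵢ (aᵢ − ā)²`, for every real `t`,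
`E[exp(t(ā₁(Z) − ā))] ≤ exp(σ²_mean t²/(n+2))`. -/
theorem mgf_sample_mean (n n₁ : ℕ) (hn : 2 ≤ n) (hn₁ : 1 ≤ n₁) (hn₁' : n₁ ≤ n - 1)
    (a : Fin n → ℝ) (t : ℝ) :
    (∑ A ∈ powersetCard n₁ (univ : Finset (Fin n)),
        Real.exp (t * ((∑ i ∈ A, a i) / (n₁ : ℝ) - (∑ i, a i) / (n : ℝ)))) /
      ((powersetCard n₁ (univ : Finset (Fin n))).card : ℝ)
      ≤ Real.exp
          ((1 / (((n₁ : ℝ) / (n : ℝ)) ^ 2 * (n : ℝ)) *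
              ∑ i, (a i - (∑ k, a k) / (n : ℝ)) ^ 2) * t ^ 2 / ((n : ℝ) + 2)) := by
  have hn0 : 0 < n := by omega
  have hn₁n : n₁ ≤ n := by omega
  have hnR : (0:ℝ) < n := by positivity
  have hn₁R : (0:ℝ) < n₁ := by exact_mod_cast hn₁
  set abar : ℝ := (∑ i, a i) / (n : ℝ) with habar
  set b : Fin n → ℝ := fun i => a i - abar with hb_def
  have hb : ∑ i, b i = 0 := by
    simp only [hb_def, Finset.sum_sub_distrib, Finset.sum_const, Finset.card_univ,
      Fintype.card_fin, nsmul_eq_mul, habar]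
    field_simp
    ring
  set s : ℝ := t / (n₁ : ℝ) with hs_def
  -- rewrite each exponent
  have hexp : ∀ A ∈ powersetCard n₁ (univ : Finset (Fin n)),
      t * ((∑ i ∈ A, a i) / (n₁ : ℝ) - abar) = s * ∑ k ∈ A, b k := by
    intro A hA
    rw [Finset.mem_powersetCard_univ] at hA
    simp only [hb_def, Finset.sum_sub_distrib, Finset.sum_const, hA, nsmul_eq_mul, hs_def]
    field_simp
  have hcard : (0:ℝ) < ((powersetCard n₁ (univ : Finset (Fin n))).card : ℝ) := by
    rw [Finset.card_powersetCard, Finset.card_univ, Fintype.card_fin]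
    exact_mod_cast Nat.choose_pos hn₁n
  have hcore := mgf_core n₁ hn0 hn₁n b hb s
  rw [Finset.sum_congr rfl (fun A hA => by rw [hexp A hA])]
  rw [div_le_iff₀ hcard]
  refine hcore.trans ?_
  rw [mul_comm]
  apply mul_le_mul_of_nonneg_right _ hcard.le
  apply Real.exp_le_exp.2
  -- (∑ b²) * s² / 2 ≤ (1/((n₁/n)²·n) * ∑ b²) * t² / (n+2)
  have hV : (0:ℝ) ≤ ∑ i, (b i)^2 := by positivity
  have hrw : (1 / (((n₁ : ℝ) / (n : ℝ)) ^ 2 * (n : ℝ)) * ∑ i, (b i)^2) * t ^ 2 / ((n : ℝ) + 2)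
      = (∑ i, (b i)^2) * s^2 * ((n:ℝ) / ((n:ℝ) + 2)) := by
    rw [hs_def]
    field_simp
  rw [hrw]
  have h2 : (1:ℝ)/2 ≤ (n:ℝ) / ((n:ℝ) + 2) := by
    rw [div_le_div_iff₀ (by norm_num) (by positivity)]
    have : (2:ℝ) ≤ n := by exact_mod_cast hn
    linarith
  calc (∑ i, (b i)^2) * s^2 / 2 = (∑ i, (b i)^2) * s^2 * (1/2) := by ring
    _ ≤ (∑ i, (b i)^2) * s^2 * ((n:ℝ) / ((n:ℝ) + 2)) := by
        apply mul_le_mul_of_nonneg_left h2 (by positivity)
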